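/- Let P be an invertible real n×n matrix and define, for a real n×n matrix M, H_P(M) := (1/2)(P M P⁻¹ + (P M P⁻¹)ᵀ). Let X and Z be real symmetric positive semidefinite n×n matrices and δ a real number. Then H_P(X Z) = δ I if and only if X Z = δ I, where I is the n×n identity matrix. -/

import Mathlib

open Matrix
open scoped MatrixOrder

private lemma trace_transpose_mul_self_sum {n : ℕ} (C : Matrix (Fin n) (Fin n) ℝ) :
    Matrix.trace (Cᵀ * C) = ∑ j, ∑ i, (C i j) ^ 2 := by
  simp [Matrix.trace, Matrix.mul_apply, Matrix.diag, sq]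

private lemma trace_transpose_mul_self_nonneg {n : ℕ} (C : Matrix (Fin n) (Fin n) ℝ) :
    0 ≤ Matrix.trace (Cᵀ * C) := by
  rw [trace_transpose_mul_self_sum]
  exact Finset.sum_nonneg fun j _ => Finset.sum_nonneg fun i _ => sq_nonneg _

private lemma eq_zero_of_trace_transpose_mul_self {n : ℕ} {C : Matrix (Fin n) (Fin n) ℝ}
    (h : Matrix.trace (Cᵀ * C) = 0) : C = 0 := by
  rw [trace_transpose_mul_self_sum] at h
  ext i j
  have h1 : ∀ j ∈ Finset.univ, (0:ℝ) ≤ ∑ i, (C i j)^2 :=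
    fun j _ => Finset.sum_nonneg fun i _ => sq_nonneg _
  have h2 := (Finset.sum_eq_zero_iff_of_nonneg h1).mp h j (Finset.mem_univ j)
  have h3 := (Finset.sum_eq_zero_iff_of_nonneg
    (fun i _ => sq_nonneg (C i j))).mp h2 i (Finset.mem_univ i)
  simpa using pow_eq_zero_iff (n := 2) (by norm_num) |>.mp h3

/-- For the similarity-symmetrization operator `H_P(M) := (1/2)(P M P⁻¹ + (P M P⁻¹)ᵀ)` with
`P` invertible and `X`, `Z` symmetric positive semidefinite, `H_P(X Z) = δ I` iff `X Z = δ I`. -/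
theorem hp_symmetrization_iff (n : ℕ) (P : Matrix (Fin n) (Fin n) ℝ) (hP : IsUnit P.det)
    (X Z : Matrix (Fin n) (Fin n) ℝ) (hX : X.PosSemidef) (hZ : Z.PosSemidef) (δ : ℝ) :
    (1 / 2 : ℝ) • (P * (X * Z) * P⁻¹ + (P * (X * Z) * P⁻¹)ᵀ) =
        δ • (1 : Matrix (Fin n) (Fin n) ℝ) ↔
      X * Z = δ • (1 : Matrix (Fin n) (Fin n) ℝ) := by
  have hPP : P * P⁻¹ = 1 := Matrix.mul_nonsing_inv P hP
  have hPP' : P⁻¹ * P = 1 := Matrix.nonsing_inv_mul P hP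
  have hPδ : P * (δ • (1 : Matrix (Fin n) (Fin n) ℝ)) * P⁻¹ = δ • 1 := by
    rw [Matrix.mul_smul, Matrix.smul_mul, Matrix.mul_one, hPP]
  constructor
  · intro h
    -- R = sqrt X
    set R := CFC.sqrt X with hRdef
    have hRR : R * R = X := CFC.sqrt_mul_sqrt_self X hX.nonneg
    have hRt : Rᵀ = R := by
      have h' : Rᴴ = R := (CFC.sqrt_nonneg X).posSemidef.1
      rwa [conjTranspose_eq_transpose_of_trivial] at h'
    have hZt : Zᵀ = Z := by
      have h' : Zᴴ = Z := hZ.1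
      rwa [conjTranspose_eq_transpose_of_trivial] at h'
    set M : Matrix (Fin n) (Fin n) ℝ := X * Z - δ • 1 with hMdef
    set C : Matrix (Fin n) (Fin n) ℝ := R * Z * R - δ • 1 with hCdef
    set S : Matrix (Fin n) (Fin n) ℝ := P * M * P⁻¹ with hSdef
    have hCt : Cᵀ = C := by
      rw [hCdef, transpose_sub, transpose_smul, transpose_one, transpose_mul, transpose_mul,
        hRt, hZt]
      rw [mul_assoc]
    -- traces
    have t1 : Matrix.trace (X * Z) = Matrix.trace (R * Z * R) := by
      rw [← hRR, Matrix.trace_mul_cycle, Matrix.trace_mul_cycle]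
    have t2 : Matrix.trace (X * Z * (X * Z)) = Matrix.trace (R * Z * R * (R * Z * R)) := by
      rw [← hRR]
      simpa [mul_assoc] using Matrix.trace_mul_comm R (R * Z * R * R * Z)
    have hMC : Matrix.trace (M * M) = Matrix.trace (C * C) := by
      simp only [hMdef, hCdef, sub_mul, mul_sub, Matrix.smul_mul, Matrix.mul_smul,
        one_mul, mul_one, Matrix.trace_sub, Matrix.trace_smul, smul_smul, smul_eq_mul,
        Matrix.trace_add]
      rw [t1, t2]
    -- S is skew
    have hS2 : S = P * (X * Z) * P⁻¹ - δ • 1 := by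
      rw [hSdef, hMdef, Matrix.mul_sub, Matrix.sub_mul, hPδ]
    have h2 : P * (X * Z) * P⁻¹ + (P * (X * Z) * P⁻¹)ᵀ = (2 * δ) • 1 := by
      have := congrArg (fun Y => (2:ℝ) • Y) h
      simpa [smul_smul] using this
    have hskew : Sᵀ = -S := by
      rw [hS2, transpose_sub, transpose_smul, transpose_one]
      have hAt : (P * (X * Z) * P⁻¹)ᵀ = (2 * δ) • 1 - P * (X * Z) * P⁻¹ := by
        rw [← h2]; abel
      rw [hAt, two_mul, add_smul]
      abel
    -- trace (S*S) = trace (M*M)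
    have hSSmm : S * S = P * (M * M) * P⁻¹ := by
      rw [hSdef]
      rw [mul_assoc (P * M) P⁻¹ (P * M * P⁻¹), ← mul_assoc P⁻¹ (P * M) P⁻¹,
        ← mul_assoc P⁻¹ P M, hPP', one_mul]
      rw [mul_assoc P M (M * P⁻¹), ← mul_assoc M M P⁻¹, ← mul_assoc P (M * M) P⁻¹]
    have hSS : Matrix.trace (S * S) = Matrix.trace (M * M) := by
      rw [hSSmm, Matrix.trace_mul_cycle, hPP', one_mul]
    -- combine
    have key : Matrix.trace (Cᵀ * C) = - Matrix.trace (Sᵀ * S) := by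
      rw [hCt, hskew, Matrix.neg_mul, Matrix.trace_neg, neg_neg, hSS, hMC]
    have hC0 : Matrix.trace (Cᵀ * C) = 0 :=
      le_antisymm (by rw [key]; simpa using trace_transpose_mul_self_nonneg S)
        (trace_transpose_mul_self_nonneg C)
    have hS0tr : Matrix.trace (Sᵀ * S) = 0 := by
      have := key; rw [hC0] at this; linarith
    have hSzero : S = 0 := eq_zero_of_trace_transpose_mul_self hS0tr
    have hMzero : M = 0 := by
      have : P⁻¹ * S * P = M := by
        rw [hSdef, ← mul_assoc P⁻¹ (P * M) P⁻¹, ← mul_assoc P⁻¹ P M, hPP', one_mul,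
          mul_assoc, hPP', mul_one]
      rw [hSzero] at this
      simpa using this.symm
    rw [hMdef] at hMzero
    exact sub_eq_zero.mp hMzero
  · intro h
    rw [h, hPδ, Matrix.transpose_smul, Matrix.transpose_one, ← two_smul ℝ, smul_smul, smul_smul]
    norm_num
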